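/- Let P : ℝ^d → ℝ be twice continuously differentiable with L-Lipschitz Hessian, and let x* be a point with largest eigenvalue of ∇²P(x*) (in absolute value) equal to Γ. Let x_{t-1} ∈ ℝ^d and suppose Δ ∈ ℝ^d satisfies Δ = ∇²P(x_{t-1})(x_{t-1} - x*). For ρ > 0 and η > 0, define F = ΔΔᵀ + ρI and the update x_t = x_{t-1} - η F⁻¹ Δ. Then ‖x_t - x*‖ ≤ ε₁‖x_{t-1} - x*‖ + ε₂‖x_{t-1} - x*‖², where ε₁ = 1 + Γη/ρ + Γη‖Δ‖²/(ρ² + ρΔᵀΔ) and ε₂ = Lη/ρ + Lη‖Δ‖²/(ρ² + ρΔᵀΔ). -/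

import Mathlib

set_option maxHeartbeats 800000


open Matrix

/-- Theorem 1 of the paper: linear-quadratic convergence guarantee of the pFedSOP
personalized-model update `x_t = x_{t-1} - η F⁻¹ Δ` with `F = ΔΔᵀ + ρI`, where
`Hess` is the (symmetric, L-Lipschitz) Hessian of the twice continuously differentiable
objective `P`, `Γ` is the operator norm (largest eigenvalue in absolute value) of the
Hessian at the optimum `x*`, and `Δ = ∇²P(x_{t-1})(x_{t-1} - x*)`. -/
theorem pfedsop_linear_quadratic_convergence {d : ℕ}
    (P : EuclideanSpace ℝ (Fin d) → ℝ)
    (Hess : EuclideanSpace ℝ (Fin d) → Matrix (Fin d) (Fin d) ℝ)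
    (hP : ContDiff ℝ 2 P)
    (hHess : ∀ x : EuclideanSpace ℝ (Fin d), ∀ u v : EuclideanSpace ℝ (Fin d),
      (iteratedFDeriv ℝ 2 P x) ![u, v] = (u : Fin d → ℝ) ⬝ᵥ (Hess x).mulVec v)
    (hsymm : ∀ x, (Hess x).IsSymm)
    (L : ℝ)
    (hLip : ∀ x y : EuclideanSpace ℝ (Fin d),
      ‖Matrix.toEuclideanCLM (𝕜 := ℝ) (Hess x - Hess y)‖ ≤ L * ‖x - y‖)
    (xstar xprev : EuclideanSpace ℝ (Fin d)) (Γ : ℝ)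
    (hΓ : ‖Matrix.toEuclideanCLM (𝕜 := ℝ) (Hess xstar)‖ = Γ)
    (Δ : EuclideanSpace ℝ (Fin d))
    (hΔ : (Δ : Fin d → ℝ) = (Hess xprev).mulVec (xprev - xstar))
    (ρ η : ℝ) (hρ : 0 < ρ) (hη : 0 < η)
    (xt : EuclideanSpace ℝ (Fin d))
    (hxt : xt = xprev -
      (WithLp.equiv 2 (Fin d → ℝ)).symm
        (η • (vecMulVec Δ Δ + ρ • (1 : Matrix (Fin d) (Fin d) ℝ))⁻¹.mulVec Δ)) :
    ‖xt - xstar‖ ≤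
      (1 + Γ * η / ρ + Γ * η * ‖Δ‖ ^ 2 / (ρ ^ 2 + ρ * (Δ ⬝ᵥ Δ))) * ‖xprev - xstar‖ +
      (L * η / ρ + L * η * ‖Δ‖ ^ 2 / (ρ ^ 2 + ρ * (Δ ⬝ᵥ Δ))) * ‖xprev - xstar‖ ^ 2 := by
  -- Basic notation
  set s : ℝ := (Δ : Fin d → ℝ) ⬝ᵥ (Δ : Fin d → ℝ) with hsdef
  have hsnorm : ‖Δ‖ ^ 2 = s := by
    rw [← real_inner_self_eq_norm_sq]
    simp [hsdef, PiLp.inner_apply, dotProduct, RCLike.inner_apply]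
    rw [EuclideanSpace.norm_eq, Real.sq_sqrt (by positivity)]; simp [Real.norm_eq_abs, sq_abs, sq]
  have hs : 0 ≤ s := hsnorm ▸ sq_nonneg ‖Δ‖
  -- Sherman–Morrison: F⁻¹ Δ = (ρ + s)⁻¹ • Δ
  have hvv : ∀ w : Fin d → ℝ, (vecMulVec (Δ : Fin d → ℝ) Δ).mulVec w
      = ((Δ : Fin d → ℝ) ⬝ᵥ w) • (Δ : Fin d → ℝ) := by
    intro w; ext i
    simp [mulVec, dotProduct, vecMulVec_apply, Finset.mul_sum, Finset.sum_mul, mul_comm, mul_assoc]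
    exact Finset.sum_congr rfl fun k _ => by ring
  have hmul : vecMulVec (Δ : Fin d → ℝ) Δ * vecMulVec (Δ : Fin d → ℝ) Δ
      = s • vecMulVec (Δ : Fin d → ℝ) Δ := by
    ext i j
    simp [mul_apply, vecMulVec_apply, dotProduct, Finset.sum_mul, Finset.mul_sum, hsdef]
    ring_nf
    congr 1; ext k; ring
  have hden : ρ ^ 2 + ρ * s ≠ 0 := by positivity
  have hinv : (vecMulVec (Δ : Fin d → ℝ) Δ + ρ • (1 : Matrix (Fin d) (Fin d) ℝ))⁻¹
      = ρ⁻¹ • (1 : Matrix (Fin d) (Fin d) ℝ) - (ρ ^ 2 + ρ * s)⁻¹ • vecMulVec (Δ : Fin d → ℝ) Δ := by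
    apply inv_eq_right_inv
    have expand : (vecMulVec (Δ : Fin d → ℝ) Δ + ρ • (1 : Matrix (Fin d) (Fin d) ℝ)) *
        (ρ⁻¹ • (1 : Matrix (Fin d) (Fin d) ℝ)
          - (ρ ^ 2 + ρ * s)⁻¹ • vecMulVec (Δ : Fin d → ℝ) Δ)
        = (ρ⁻¹ - (ρ ^ 2 + ρ * s)⁻¹ * s - ρ * (ρ ^ 2 + ρ * s)⁻¹) • vecMulVec (Δ : Fin d → ℝ) Δ
          + (ρ * ρ⁻¹) • (1 : Matrix (Fin d) (Fin d) ℝ) := by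
      simp only [add_mul, mul_sub, smul_mul_assoc, mul_smul_comm, hmul, one_mul, mul_one,
        smul_smul]
      module
    rw [expand, mul_inv_cancel₀ hρ.ne', one_smul]
    have hc : (ρ⁻¹ - (ρ ^ 2 + ρ * s)⁻¹ * s - ρ * (ρ ^ 2 + ρ * s)⁻¹) = 0 := by
      field_simp
      ring
    rw [hc, zero_smul, zero_add]
  have hρs : (0:ℝ) < ρ + s := by positivity
  have hinvΔ : (vecMulVec (Δ : Fin d → ℝ) Δ + ρ • (1 : Matrix (Fin d) (Fin d) ℝ))⁻¹.mulVec Δ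
      = (ρ + s)⁻¹ • (Δ : Fin d → ℝ) := by
    rw [hinv, sub_mulVec, smul_mulVec, one_mulVec, smul_mulVec, hvv, ← hsdef]
    ext i
    simp [smul_smul]
    field_simp
    ring
  -- Rewrite the update as a genuine EuclideanSpace statement
  set k : ℝ := η * (ρ + s)⁻¹ with hkdef
  have hk0 : 0 ≤ k := by positivity
  have hxt' : xt - xstar = (xprev - xstar) - k • Δ := by
    rw [hxt, hinvΔ]
    have : (WithLp.equiv 2 (Fin d → ℝ)).symm (η • (ρ + s)⁻¹ • (Δ : Fin d → ℝ)) = k • Δ := by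
      rw [smul_smul]; rfl
    rw [this]; abel
  set r : ℝ := ‖xprev - xstar‖ with hrdef
  -- Bound on ‖Δ‖
  have hΔclm : Δ = Matrix.toEuclideanCLM (𝕜 := ℝ) (Hess xprev) (xprev - xstar) := by
    apply (WithLp.equiv 2 (Fin d → ℝ)).injective
    simp only [WithLp.equiv_apply, Matrix.ofLp_toEuclideanCLM]
    simpa [Matrix.toLin'_apply] using hΔ
  have hopnorm : ‖Matrix.toEuclideanCLM (𝕜 := ℝ) (Hess xprev)‖ ≤ Γ + L * r := by
    have h1 : Hess xprev = (Hess xprev - Hess xstar) + Hess xstar := by abel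
    calc ‖Matrix.toEuclideanCLM (𝕜 := ℝ) (Hess xprev)‖
        = ‖Matrix.toEuclideanCLM (𝕜 := ℝ) (Hess xprev - Hess xstar)
            + Matrix.toEuclideanCLM (𝕜 := ℝ) (Hess xstar)‖ := by rw [← map_add, ← h1]
      _ ≤ ‖Matrix.toEuclideanCLM (𝕜 := ℝ) (Hess xprev - Hess xstar)‖
            + ‖Matrix.toEuclideanCLM (𝕜 := ℝ) (Hess xstar)‖ := norm_add_le _ _
      _ ≤ L * r + Γ := add_le_add (hLip xprev xstar) hΓ.le
      _ = Γ + L * r := by ring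
  have hΔnorm : ‖Δ‖ ≤ (Γ + L * r) * r := by
    rw [hΔclm]
    calc ‖Matrix.toEuclideanCLM (𝕜 := ℝ) (Hess xprev) (xprev - xstar)‖
        ≤ ‖Matrix.toEuclideanCLM (𝕜 := ℝ) (Hess xprev)‖ * r :=
          (Matrix.toEuclideanCLM (𝕜 := ℝ) (Hess xprev)).le_opNorm _
      _ ≤ (Γ + L * r) * r := mul_le_mul_of_nonneg_right hopnorm (norm_nonneg _)
  -- Main norm estimate
  have hmain : ‖xt - xstar‖ ≤ r + k * ‖Δ‖ := by
    rw [hxt']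
    calc ‖(xprev - xstar) - k • Δ‖ ≤ ‖xprev - xstar‖ + ‖k • Δ‖ := norm_sub_le _ _
      _ = r + k * ‖Δ‖ := by rw [norm_smul, Real.norm_of_nonneg hk0]
  have hΓ0 : 0 ≤ Γ := hΓ ▸ norm_nonneg _
  have hr0 : 0 ≤ r := norm_nonneg _
  have hd2 : (0:ℝ) < ρ ^ 2 + ρ * s := by positivity
  rw [hsnorm]
  rcases hr0.eq_or_lt with hr | hr
  · -- degenerate case xprev = xstar
    have hx : xprev - xstar = 0 := by rw [← norm_eq_zero, ← hrdef, ← hr]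
    have hΔ0 : Δ = 0 := by rw [hΔclm, hx, map_zero]
    have h0 : ‖xt - xstar‖ ≤ 0 := by
      have := hmain
      rw [hΔ0, norm_zero, ← hr] at this
      simpa using this
    rw [← hr]
    simpa using h0
  · -- nondegenerate case: L ≥ 0
    have hL0 : 0 ≤ L := by
      have h1 := hLip xprev xstar
      have h2 : (0:ℝ) ≤ L * r := le_trans (norm_nonneg _) h1
      nlinarith
    have hk : k ≤ η / ρ := by
      rw [hkdef, ← div_eq_mul_inv]
      gcongr
      linarith
    have hstep : r + k * ‖Δ‖ ≤ r + k * ((Γ + L * r) * r) :=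
      add_le_add_right (mul_le_mul_of_nonneg_left hΔnorm hk0) r
    refine le_trans hmain (le_trans hstep ?_)
    have hterm1 : 0 ≤ Γ * η * s / (ρ ^ 2 + ρ * s) :=
      div_nonneg (mul_nonneg (mul_nonneg hΓ0 hη.le) hs) hd2.le
    have hterm2 : 0 ≤ L * η * s / (ρ ^ 2 + ρ * s) :=
      div_nonneg (mul_nonneg (mul_nonneg hL0 hη.le) hs) hd2.le
    have e1 : k * Γ ≤ Γ * η / ρ := by
      calc k * Γ ≤ (η / ρ) * Γ := mul_le_mul_of_nonneg_right hk hΓ0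
        _ = Γ * η / ρ := by ring
    have e2 : k * L ≤ L * η / ρ := by
      calc k * L ≤ (η / ρ) * L := mul_le_mul_of_nonneg_right hk hL0
        _ = L * η / ρ := by ring
    have a1 := mul_le_mul_of_nonneg_right e1 hr0
    have a2 := mul_le_mul_of_nonneg_right e2 (sq_nonneg r)
    have a3 := mul_nonneg hterm1 hr0
    have a4 := mul_nonneg hterm2 (sq_nonneg r)
    calc r + k * ((Γ + L * r) * r) = r + (k * Γ) * r + (k * L) * r ^ 2 := by ring
      _ ≤ r + (Γ * η / ρ) * r + (L * η / ρ) * r ^ 2 := by linarith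
      _ ≤ (1 + Γ * η / ρ + Γ * η * s / (ρ ^ 2 + ρ * s)) * r
            + (L * η / ρ + L * η * s / (ρ ^ 2 + ρ * s)) * r ^ 2 := by linarith
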